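/- arXiv:1408.2426 — 2 statements merged into one kernel-verified Lean document; each statement's English description precedes it below -/
import Mathlib

section
/- With A, B, C and f as in the hexagon counterexample, for every choice of points S1, S2 in R^2, the extension of f to {A,B,C,0} sending the origin 0 to the unordered pair {S1,S2} has Lipschitz constant at least 1. That is, max over X in {A,B,C} of G({S1,S2}, f(X)) ≥ 1 (note |X| = 1 for each X). -/
set_option maxHeartbeats 1000000

noncomputable def Gdist
    (p q : EuclideanSpace ℝ (Fin 2) × EuclideanSpace ℝ (Fin 2)) : ℝ :=
  min (Real.sqrt (‖p.1 - q.1‖ ^ 2 + ‖p.2 - q.2‖ ^ 2))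
      (Real.sqrt (‖p.1 - q.2‖ ^ 2 + ‖p.2 - q.1‖ ^ 2))

noncomputable def P1 : EuclideanSpace ℝ (Fin 2) := !₂[0, 1]
noncomputable def P2 : EuclideanSpace ℝ (Fin 2) := !₂[Real.sqrt 3 / 2, 1 / 2]
noncomputable def P3 : EuclideanSpace ℝ (Fin 2) := !₂[Real.sqrt 3 / 2, -(1 / 2)]
noncomputable def P4 : EuclideanSpace ℝ (Fin 2) := !₂[0, -1]
noncomputable def P5 : EuclideanSpace ℝ (Fin 2) := !₂[-(Real.sqrt 3 / 2), -(1 / 2)]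
noncomputable def P6 : EuclideanSpace ℝ (Fin 2) := !₂[-(Real.sqrt 3 / 2), 1 / 2]

noncomputable def A : EuclideanSpace ℝ (Fin 2) := !₂[0, 1]
noncomputable def B : EuclideanSpace ℝ (Fin 2) := !₂[-(Real.sqrt 3 / 2), -(1 / 2)]
noncomputable def C : EuclideanSpace ℝ (Fin 2) := !₂[Real.sqrt 3 / 2, -(1 / 2)]

lemma norm_sq_two (w : EuclideanSpace ℝ (Fin 2)) : ‖w‖ ^ 2 = w 0 ^ 2 + w 1 ^ 2 := by
  rw [EuclideanSpace.norm_eq, Real.sq_sqrt (by positivity)]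
  simp [Fin.sum_univ_two, sq_abs]

lemma sub_apply' (w p : EuclideanSpace ℝ (Fin 2)) (i : Fin 2) : (w - p) i = w i - p i := rfl

lemma one_le_sqrt' {x : ℝ} (h : 1 ≤ x) : 1 ≤ Real.sqrt x := by
  rw [show (1:ℝ) = Real.sqrt 1 by simp]
  exact Real.sqrt_le_sqrt h

lemma key_real (a b c d : ℝ) :
    1 ≤ max
      (min (Real.sqrt ((a - 0) ^ 2 + (b - 1) ^ 2 + ((c - 0) ^ 2 + (d - (-1)) ^ 2)))
           (Real.sqrt ((a - 0) ^ 2 + (b - (-1)) ^ 2 + ((c - 0) ^ 2 + (d - 1) ^ 2))))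
      (max
      (min (Real.sqrt ((a - Real.sqrt 3 / 2) ^ 2 + (b - 1/2) ^ 2 +
              ((c - (-(Real.sqrt 3 / 2))) ^ 2 + (d - (-(1/2))) ^ 2)))
           (Real.sqrt ((a - (-(Real.sqrt 3 / 2))) ^ 2 + (b - (-(1/2))) ^ 2 +
              ((c - Real.sqrt 3 / 2) ^ 2 + (d - 1/2) ^ 2))))
      (min (Real.sqrt ((a - Real.sqrt 3 / 2) ^ 2 + (b - (-(1/2))) ^ 2 +
              ((c - (-(Real.sqrt 3 / 2))) ^ 2 + (d - 1/2) ^ 2)))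
           (Real.sqrt ((a - (-(Real.sqrt 3 / 2))) ^ 2 + (b - 1/2) ^ 2 +
              ((c - Real.sqrt 3 / 2) ^ 2 + (d - (-(1/2))) ^ 2))))) := by
  have h3 : Real.sqrt 3 ^ 2 = 3 := Real.sq_sqrt (by norm_num)
  obtain ⟨r, hr⟩ : ∃ r, r = a^2+b^2+c^2+d^2 := ⟨_, rfl⟩
  have hsum : (a-c)^2 + (b-d)^2 ≤ 2*r := by rw [hr]; nlinarith [sq_nonneg (a+c), sq_nonneg (b+d)]
  have h2r : 2*r ≤ (r+1)^2 := by nlinarith [sq_nonneg (r-1)]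
  have hr1 : (0:ℝ) ≤ r + 1 := by rw [hr]; positivity
  by_cases hu : (a - c) * ((a - c) + Real.sqrt 3 * (b - d)) ≤ 0
  · have hb2 : (Real.sqrt 3 * (a - c) + (b - d))^2 ≤ (r+1)^2 := by
      rw [hr] at hsum h2r ⊢; nlinarith [h3, hu, hsum, h2r]
    obtain ⟨hl, hrr⟩ := abs_le_of_sq_le_sq' hb2 hr1
    rw [hr] at hl hrr
    refine le_trans ?_ (le_max_of_le_right (le_max_left _ _))
    refine le_min (one_le_sqrt' ?_) (one_le_sqrt' ?_)
    · nlinarith [h3, hrr]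
    · nlinarith [h3, hl]
  · by_cases hw : (a - c) * ((a - c) - Real.sqrt 3 * (b - d)) ≤ 0
    · have hb2 : (Real.sqrt 3 * (a - c) - (b - d))^2 ≤ (r+1)^2 := by
        rw [hr] at hsum h2r ⊢; nlinarith [h3, hw, hsum, h2r]
      obtain ⟨hl, hrr⟩ := abs_le_of_sq_le_sq' hb2 hr1
      rw [hr] at hl hrr
      refine le_trans ?_ (le_max_of_le_right (le_max_right _ _))
      refine le_min (one_le_sqrt' ?_) (one_le_sqrt' ?_)
      · nlinarith [h3, hrr]
      · nlinarith [h3, hl]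
    · push_neg at hu hw
      have hm := mul_pos hu hw
      have heq : ((a-c)*((a-c)+Real.sqrt 3*(b-d))) * ((a-c)*((a-c)-Real.sqrt 3*(b-d)))
          = (a-c)^2*((a-c)^2 - Real.sqrt 3^2*(b-d)^2) := by ring
      rw [h3] at heq
      rw [heq] at hm
      have hkey : 3 * (b - d) ^ 2 ≤ (a - c) ^ 2 := by
        nlinarith [hm, sq_nonneg (a-c), sq_nonneg (b-d)]
      have hb2 : (2 * (b - d))^2 ≤ (r+1)^2 := by nlinarith [hkey, hsum, h2r]
      obtain ⟨hl, hrr⟩ := abs_le_of_sq_le_sq' hb2 hr1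
      rw [hr] at hl hrr
      refine le_trans ?_ (le_max_left _ _)
      refine le_min (one_le_sqrt' ?_) (one_le_sqrt' ?_)
      · nlinarith [hl]
      · nlinarith [hrr]

/-- Any candidate value {S1,S2} at the origin is at Wasserstein distance at
least 1 from one of f(A), f(B), f(C); since |A|=|B|=|C|=1, any extension of f
to {A,B,C,0} has Lipschitz constant at least 1. -/
theorem one_point_extension_lipschitz_ge_one
    (S1 S2 : EuclideanSpace ℝ (Fin 2)) :
    1 ≤ max (Gdist (S1, S2) (P1, P4))
        (max (Gdist (S1, S2) (P2, P5)) (Gdist (S1, S2) (P3, P6))) := by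
  have E : ∀ (w p : EuclideanSpace ℝ (Fin 2)),
      ‖w - p‖ ^ 2 = (w 0 - p 0) ^ 2 + (w 1 - p 1) ^ 2 := by
    intro w p; rw [norm_sq_two, sub_apply', sub_apply']
  have c1 : P1 0 = 0 ∧ P1 1 = 1 := ⟨rfl, rfl⟩
  have c2 : P2 0 = Real.sqrt 3 / 2 ∧ P2 1 = 1/2 := ⟨rfl, rfl⟩
  have c3 : P3 0 = Real.sqrt 3 / 2 ∧ P3 1 = -(1/2) := ⟨rfl, rfl⟩
  have c4 : P4 0 = 0 ∧ P4 1 = -1 := ⟨rfl, rfl⟩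
  have c5 : P5 0 = -(Real.sqrt 3 / 2) ∧ P5 1 = -(1/2) := ⟨rfl, rfl⟩
  have c6 : P6 0 = -(Real.sqrt 3 / 2) ∧ P6 1 = 1/2 := ⟨rfl, rfl⟩
  unfold Gdist
  simp only [E, c1.1, c1.2, c2.1, c2.2, c3.1, c3.2, c4.1, c4.2, c5.1, c5.2, c6.1, c6.2]
  exact key_real (S1 0) (S1 1) (S2 0) (S2 1)
end

section
/- There is no analog of Kirszbraun's theorem for 2-valued functions: there exist a finite subset B of R^2 and a Lipschitz map f : B → A_2(R^2) (with the Wasserstein metric G) such that every extension of f to B ∪ {0} has Lipschitz constant at least √(3/2) times the Lipschitz constant of f. In particular, f admits no extension to R^2 with the same Lipschitz constant. -/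
open RealInnerProductSpace in
/-- min-of-sqrt comparison -/
private lemma sqrt_min_le {X Y a : ℝ} (hX : 0 ≤ X) (hY : 0 ≤ Y) (ha : 0 ≤ a)
    (h : min (Real.sqrt X) (Real.sqrt Y) ≤ a) : min X Y ≤ a ^ 2 := by
  rcases min_le_iff.mp h with h' | h'
  · exact min_le_of_left_le (by calc X = Real.sqrt X ^ 2 := (Real.sq_sqrt hX).symm
      _ ≤ a ^ 2 := by gcongr)
  · exact min_le_of_right_le (by calc Y = Real.sqrt Y ^ 2 := (Real.sq_sqrt hY).symm
      _ ≤ a ^ 2 := by gcongr)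

private lemma key_real_s4 (t c0 c1 c2 u L' : ℝ) (ht : 0 ≤ t)
    (hsum : c0 + c1 + c2 = 0)
    (h0l : -u ≤ c0) (h0r : c0 ≤ u) (h1l : -u ≤ c1) (h1r : c1 ≤ u)
    (h2l : -u ≤ c2) (h2r : c2 ≤ u) (hut : u ^ 2 ≤ 2 * t) (hL : 0 ≤ L')
    (k0 : min (t + 2 - 2 * c0) (t + 2 + 2 * c0) ≤ L' ^ 2)
    (k1 : min (t + 2 - 2 * c1) (t + 2 + 2 * c1) ≤ L' ^ 2)
    (k2 : min (t + 2 - 2 * c2) (t + 2 + 2 * c2) ≤ L' ^ 2) :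
    1 ≤ L' := by
  rcases min_le_iff.mp k0 with a0 | a0 <;> rcases min_le_iff.mp k1 with a1 | a1 <;>
    rcases min_le_iff.mp k2 with a2 | a2 <;>
    nlinarith [sq_nonneg (u - 4/3), sq_nonneg (L' - 1), sq_nonneg L', sq_nonneg u]


private lemma Gdist_nonneg' (p q) : 0 ≤ Gdist p q :=
  le_min (Real.sqrt_nonneg _) (Real.sqrt_nonneg _)

private lemma Gdist_self' (p) : Gdist p p = 0 := by
  unfold Gdist
  rw [sub_self, sub_self, norm_zero]
  norm_num

open RealInnerProductSpace in
private lemma Gdist_pair (x y : EuclideanSpace ℝ (Fin 2)) (hx : ‖x‖ ^ 2 = 1)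
    (hy : ‖y‖ ^ 2 = 1) (h : ⟪x, y⟫ = -(1/2)) :
    Gdist (x, -x) (y, -y) = Real.sqrt 2 := by
  have hd : ‖x - y‖ ^ 2 = 3 := by rw [norm_sub_sq_real]; rw [h] at *; linarith
  have hs : ‖x + y‖ ^ 2 = 1 := by rw [norm_add_sq_real]; rw [h] at *; linarith
  unfold Gdist
  simp only [sub_neg_eq_add, neg_sub_neg]
  rw [show -x + y = -(x - y) from by abel, show -x - y = -(x + y) from by abel,
    norm_neg, norm_neg, hd, hs]
  rw [show (3:ℝ) + 3 = 6 by norm_num, show (1:ℝ) + 1 = 2 by norm_num]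
  exact min_eq_right (Real.sqrt_le_sqrt (by norm_num))

noncomputable def mkv (a b : ℝ) : EuclideanSpace ℝ (Fin 2) :=
  (WithLp.equiv 2 (Fin 2 → ℝ)).symm ![a, b]

noncomputable def w0 : EuclideanSpace ℝ (Fin 2) := mkv 1 0
noncomputable def w1 : EuclideanSpace ℝ (Fin 2) := mkv (-(1/2)) (Real.sqrt 3 / 2)
noncomputable def w2 : EuclideanSpace ℝ (Fin 2) := mkv (-(1/2)) (-(Real.sqrt 3 / 2))

open RealInnerProductSpace

private lemma sq3 : Real.sqrt 3 ^ 2 = 3 := Real.sq_sqrt (by norm_num)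

private lemma inner01 : ⟪w0, w1⟫ = -(1/2) := by
  simp [w0, w1, mkv, PiLp.inner_apply, Fin.sum_univ_two]

private lemma inner02 : ⟪w0, w2⟫ = -(1/2) := by
  simp [w0, w2, mkv, PiLp.inner_apply, Fin.sum_univ_two]

private lemma inner12 : ⟪w1, w2⟫ = -(1/2) := by
  simp [w1, w2, mkv, PiLp.inner_apply, Fin.sum_univ_two]
  nlinarith [sq3]

private lemma norm_w0 : ‖w0‖ ^ 2 = 1 := by
  rw [← real_inner_self_eq_norm_sq, PiLp.inner_apply]
  simp [w0, mkv, PiLp.inner_apply, Fin.sum_univ_two]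

private lemma norm_w1 : ‖w1‖ ^ 2 = 1 := by
  rw [← real_inner_self_eq_norm_sq, PiLp.inner_apply]
  simp [w1, mkv, PiLp.inner_apply, Fin.sum_univ_two]
  nlinarith [sq3]

private lemma norm_w2 : ‖w2‖ ^ 2 = 1 := by
  rw [← real_inner_self_eq_norm_sq, PiLp.inner_apply]
  simp [w2, mkv, PiLp.inner_apply, Fin.sum_univ_two]
  nlinarith [sq3]

private lemma sum_w : w0 + w1 + w2 = 0 := by
  ext i; fin_cases i <;> (simp [w0, w1, w2, mkv]; try ring)

private lemma norm_eq_one_of_sq {x : EuclideanSpace ℝ (Fin 2)} (h : ‖x‖ ^ 2 = 1) :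
    ‖x‖ = 1 := by nlinarith [norm_nonneg x]

private lemma inner_symm' (x y : EuclideanSpace ℝ (Fin 2)) : ⟪y, x⟫ = ⟪x, y⟫ :=
  real_inner_comm x y

private lemma dist_w {x y : EuclideanSpace ℝ (Fin 2)} (hx : ‖x‖ ^ 2 = 1)
    (hy : ‖y‖ ^ 2 = 1) (h : ⟪x, y⟫ = -(1/2)) : dist x y = Real.sqrt 3 := by
  rw [dist_eq_norm, ← Real.sqrt_sq (norm_nonneg (x - y)), norm_sub_sq_real, hx, hy, h]
  norm_num

private lemma Lmul27 : Real.sqrt (2/3) * Real.sqrt 3 = Real.sqrt 2 := by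
  rw [← Real.sqrt_mul (by norm_num)]; norm_num
private abbrev E2 := EuclideanSpace ℝ (Fin 2)

/-- Kirszbraun's theorem fails for 2-valued functions: there is a finite set
B ⊆ ℝ² and a map f : B → 𝒜₂(ℝ²) with (exact) Lipschitz constant L > 0 such
that every extension of f to B ∪ {0} has Lipschitz constant at least √(3/2)·L;
in particular f has no extension to all of ℝ² with Lipschitz constant L. -/
theorem kirszbraun_fails_for_two_valued_maps :
    ∃ (B : Set (EuclideanSpace ℝ (Fin 2))), B.Finite ∧
    ∃ (f : EuclideanSpace ℝ (Fin 2) →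
        EuclideanSpace ℝ (Fin 2) × EuclideanSpace ℝ (Fin 2)) (L : ℝ),
      0 < L ∧
      (∀ x ∈ B, ∀ y ∈ B, Gdist (f x) (f y) ≤ L * dist x y) ∧
      (∀ L' : ℝ, (∀ x ∈ B, ∀ y ∈ B, Gdist (f x) (f y) ≤ L' * dist x y) →
        L ≤ L') ∧
      (∀ g : EuclideanSpace ℝ (Fin 2) →
          EuclideanSpace ℝ (Fin 2) × EuclideanSpace ℝ (Fin 2),
        (∀ x ∈ B, g x = f x) →
        ∀ L' : ℝ,
          (∀ x ∈ B ∪ {0}, ∀ y ∈ B ∪ {0}, Gdist (g x) (g y) ≤ L' * dist x y) →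
          Real.sqrt (3 / 2) * L ≤ L') ∧
      ¬ ∃ g : EuclideanSpace ℝ (Fin 2) →
          EuclideanSpace ℝ (Fin 2) × EuclideanSpace ℝ (Fin 2),
          (∀ x ∈ B, g x = f x) ∧
          (∀ x y, Gdist (g x) (g y) ≤ L * dist x y) := by
  classical
  set B : Set E2 := {w0, w1, w2} with hB
  set f : E2 → E2 × E2 := fun x => (x, -x) with hf
  set L : ℝ := Real.sqrt (2/3) with hLdef
  have hLpos : 0 < L := Real.sqrt_pos.mpr (by norm_num)
  have m0 : w0 ∈ B := by simp [hB]
  have m1 : w1 ∈ B := by simp [hB]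
  have m2 : w2 ∈ B := by simp [hB]
  have inner10 : ⟪w1, w0⟫ = -(1/2) := by rw [inner_symm']; exact inner01
  have inner20 : ⟪w2, w0⟫ = -(1/2) := by rw [inner_symm']; exact inner02
  have inner21 : ⟪w2, w1⟫ = -(1/2) := by rw [inner_symm']; exact inner12
  -- the Lipschitz bound on B, with equality for distinct points
  have step : ∀ x y : E2, ‖x‖^2 = 1 → ‖y‖^2 = 1 → ⟪x, y⟫ = -(1/2) →
      Gdist (f x) (f y) = L * dist x y := by
    intro x y hx hy h
    show Gdist (x, -x) (y, -y) = L * dist x y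
    rw [Gdist_pair x y hx hy h, dist_w hx hy h, hLdef, Lmul27]
  have lip : ∀ x ∈ B, ∀ y ∈ B, Gdist (f x) (f y) ≤ L * dist x y := by
    intro x hx y hy
    simp only [hB, Set.mem_insert_iff, Set.mem_singleton_iff] at hx hy
    rcases hx with rfl | rfl | rfl <;> rcases hy with rfl | rfl | rfl
    · rw [Gdist_self']; positivity
    · exact le_of_eq (step _ _ norm_w0 norm_w1 inner01)
    · exact le_of_eq (step _ _ norm_w0 norm_w2 inner02)
    · exact le_of_eq (step _ _ norm_w1 norm_w0 inner10)
    · rw [Gdist_self']; positivity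
    · exact le_of_eq (step _ _ norm_w1 norm_w2 inner12)
    · exact le_of_eq (step _ _ norm_w2 norm_w0 inner20)
    · exact le_of_eq (step _ _ norm_w2 norm_w1 inner21)
    · rw [Gdist_self']; positivity
  -- the key extension obstruction
  have key : ∀ g : E2 → E2 × E2, (∀ x ∈ B, g x = f x) → ∀ L' : ℝ,
      (∀ x ∈ B ∪ {0}, ∀ y ∈ B ∪ {0}, Gdist (g x) (g y) ≤ L' * dist x y) →
      Real.sqrt (3/2) * L ≤ L' := by
    intro g hg L' hL'
    have h0 : (0:E2) ∈ B ∪ {0} := Or.inr rfl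
    set p : E2 := (g 0).1 with hp
    set q : E2 := (g 0).2 with hq
    have hdist : ∀ x : E2, ‖x‖^2 = 1 → dist (0:E2) x = 1 := by
      intro x hx
      rw [dist_zero_left, norm_eq_one_of_sq hx]
    have hbase : ∀ x : E2, x ∈ B → ‖x‖^2 = 1 →
        Gdist (g 0) (x, -x) ≤ L' * 1 := by
      intro x hx hn
      have := hL' 0 h0 x (Or.inl hx)
      rwa [hg x hx, hdist x hn] at this
    have hL'0 : 0 ≤ L' := by
      have := hbase w0 m0 norm_w0
      have h2 := Gdist_nonneg' (g 0) (w0, -w0)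
      linarith
    have hexp : ∀ x : E2, x ∈ B → ‖x‖^2 = 1 →
        min ((‖p‖^2 + ‖q‖^2) + 2 - 2*(⟪p, x⟫ - ⟪q, x⟫))
          ((‖p‖^2 + ‖q‖^2) + 2 + 2*(⟪p, x⟫ - ⟪q, x⟫)) ≤ L' ^ 2 := by
      intro x hxB hx
      have e1 : ‖p - x‖^2 + ‖q - -x‖^2 = (‖p‖^2 + ‖q‖^2) + 2 - 2*(⟪p, x⟫ - ⟪q, x⟫) := by
        rw [sub_neg_eq_add, norm_sub_sq_real, norm_add_sq_real, hx]; ring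
      have e2 : ‖p - -x‖^2 + ‖q - x‖^2 = (‖p‖^2 + ‖q‖^2) + 2 + 2*(⟪p, x⟫ - ⟪q, x⟫) := by
        rw [sub_neg_eq_add, norm_sub_sq_real, norm_add_sq_real, hx]; ring
      rw [← e1, ← e2]
      refine sqrt_min_le (by positivity) (by positivity) hL'0 ?_
      have hb := hbase x hxB hx
      rw [mul_one] at hb
      exact hb
    have ht : 0 ≤ ‖p‖^2 + ‖q‖^2 := by positivity
    have hsub : ∀ v : E2, ⟪p, v⟫ - ⟪q, v⟫ = ⟪p - q, v⟫ :=
      fun v => (inner_sub_left p q v).symm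
    have hsumc : (⟪p, w0⟫ - ⟪q, w0⟫) + (⟪p, w1⟫ - ⟪q, w1⟫) + (⟪p, w2⟫ - ⟪q, w2⟫) = 0 := by
      rw [hsub, hsub, hsub, ← inner_add_right, ← inner_add_right, sum_w, inner_zero_right]
    have habs : ∀ v : E2, ‖v‖^2 = 1 → |⟪p, v⟫ - ⟪q, v⟫| ≤ ‖p - q‖ := by
      intro v hv
      rw [hsub]
      calc |⟪p - q, v⟫| ≤ ‖p - q‖ * ‖v‖ := abs_real_inner_le_norm _ _
        _ = ‖p - q‖ := by rw [norm_eq_one_of_sq hv, mul_one]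
    have hu2 : ‖p - q‖^2 ≤ 2*(‖p‖^2 + ‖q‖^2) := by
      have h1 := abs_le.mp (abs_real_inner_le_norm p q)
      rw [norm_sub_sq_real]
      nlinarith [sq_nonneg (‖p‖ - ‖q‖), h1.1]
    have goal1 : (1:ℝ) ≤ L' :=
      key_real_s4 (‖p‖^2 + ‖q‖^2) _ _ _ (‖p - q‖) L' ht hsumc
        (abs_le.mp (habs w0 norm_w0)).1 (abs_le.mp (habs w0 norm_w0)).2
        (abs_le.mp (habs w1 norm_w1)).1 (abs_le.mp (habs w1 norm_w1)).2
        (abs_le.mp (habs w2 norm_w2)).1 (abs_le.mp (habs w2 norm_w2)).2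
        hu2 hL'0 (hexp w0 m0 norm_w0) (hexp w1 m1 norm_w1) (hexp w2 m2 norm_w2)
    calc Real.sqrt (3/2) * L = 1 := by
          rw [hLdef, ← Real.sqrt_mul (by norm_num : (0:ℝ) ≤ 3/2),
            show (3/2 * (2/3) : ℝ) = 1 by norm_num, Real.sqrt_one]
      _ ≤ L' := goal1
  refine ⟨B, Set.toFinite _, f, L, hLpos, lip, ?_, key, ?_⟩
  · intro L' h
    have h01 := h w0 m0 w1 m1
    rw [step _ _ norm_w0 norm_w1 inner01, dist_w norm_w0 norm_w1 inner01] at h01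
    have h3 : (0:ℝ) < Real.sqrt 3 := Real.sqrt_pos.mpr (by norm_num)
    exact le_of_mul_le_mul_right h01 h3
  · rintro ⟨g, hgB, hgL⟩
    have hk := key g hgB L (fun x _ y _ => hgL x y)
    have h1 : 1 < Real.sqrt (3/2) := by
      rw [show (1:ℝ) = Real.sqrt 1 from (Real.sqrt_one).symm]
      exact Real.sqrt_lt_sqrt (by norm_num) (by norm_num)
    nlinarith
end
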